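/- If the universal associative envelope 𝔄 is finite-dimensional as an F-vector space, then dim_F 𝔄 ≥ 4n² + 1. -/

import Mathlib

noncomputable section

/-- The defining relations of the universal associative envelope of the anti-Jordan
triple system of `n × n` matrices: `x_{ij}x_{kl}x_{mt} - x_{mt}x_{kl}x_{ij}
- δ_{jk}δ_{lm} x_{it} + δ_{tk}δ_{li} x_{mj} ~ 0`.  (Index `1` of the paper is `0 : Fin n`.) -/
def ajtsRel (F : Type*) [Field F] (n : ℕ) :
    FreeAlgebra F (Fin n × Fin n) → FreeAlgebra F (Fin n × Fin n) → Prop :=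
  fun a b => b = 0 ∧ ∃ i j k l m t : Fin n,
    a = FreeAlgebra.ι F (i, j) * FreeAlgebra.ι F (k, l) * FreeAlgebra.ι F (m, t)
        - FreeAlgebra.ι F (m, t) * FreeAlgebra.ι F (k, l) * FreeAlgebra.ι F (i, j)
        - (if j = k ∧ l = m then FreeAlgebra.ι F (i, t) else 0)
        + (if t = k ∧ l = i then FreeAlgebra.ι F (m, j) else 0)

/-- The universal associative envelope `𝔄 = F⟨X⟩/I` of the anti-Jordan triple system of
`n × n` matrices with product `⟨a,b,c⟩ = abc - cba`. -/
abbrev Env (F : Type*) [Field F] (n : ℕ) := RingQuot (ajtsRel F n)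

/-- The image `e_{ij}` of the generator `x_{ij}` in the universal envelope `𝔄`. -/
def gen (F : Type*) [Field F] (n : ℕ) (i j : Fin n) : Env F n :=
  RingQuot.mkAlgHom F (ajtsRel F n) (FreeAlgebra.ι F (i, j))

namespace AJTSAux

open Matrix

variable {F : Type*} [Field F] {n : ℕ}

/-- `n × n` matrices. -/
abbrev M (F : Type*) [Field F] (n : ℕ) := Matrix (Fin n) (Fin n) F

/-- Target algebra `F × M_n^4`. -/
abbrev Tgt (F : Type*) [Field F] (n : ℕ) := F × (M F n × M F n × M F n × M F n)

/-- Short notation for scaled matrix units. -/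
def B (i j : Fin n) (c : F) : M F n := Matrix.single i j c

lemma B_def (i j : Fin n) (c : F) : B i j c = Matrix.single i j c := rfl

lemma Bmul (i j k l : Fin n) (c d : F) :
    B i j c * B k l d = if j = k then B i l (c * d) else 0 := by
  split_ifs with h
  · subst h
    simp only [B_def]
    exact Matrix.single_mul_single_same _ _ _ _ _
  · simp only [B_def]
    exact Matrix.single_mul_single_of_ne _ _ _ _ h _

lemma B3 (i j k l m t : Fin n) (c d e : F) :
    B i j c * B k l d * B m t e = if j = k ∧ l = m then B i t (c * d * e) else 0 := by
  rw [Bmul]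
  by_cases h1 : j = k
  · rw [if_pos h1, Bmul]
    by_cases h2 : l = m
    · rw [if_pos h2, if_pos ⟨h1, h2⟩]
    · rw [if_neg h2, if_neg (by tauto)]
  · rw [if_neg h1, zero_mul, if_neg (by tauto)]

lemma Bneg (a b : Fin n) (c : F) : B a b (-c) = -(B a b c) := by
  ext x y
  by_cases hx : a = x <;> by_cases hy : b = y <;>
    simp [B, Matrix.single, hx, hy]

lemma Badd (a b : Fin n) (c d : F) : B a b c + B a b d = B a b (c + d) :=
  (Matrix.single_add _ _ _ _).symm

lemma Bsmul (a b : Fin n) (r c : F) : r • B a b c = B a b (r * c) := by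
  rw [B_def, B_def, Matrix.smul_single, smul_eq_mul]

lemma Bzero (a b : Fin n) : B a b (0 : F) = 0 := Matrix.single_zero _ _

lemma keyA (c : F) (hc : c * c = 1) (i j k l m t : Fin n) :
    B i j c * B k l c * B m t c - B m t c * B k l c * B i j c
      - (if j = k ∧ l = m then B i t c else 0)
      + (if t = k ∧ l = i then B m j c else 0) = 0 := by
  have h3 : c * c * c = c := by rw [hc, one_mul]
  simp only [B3, h3]
  split_ifs <;> abel

lemma keyB (c : F) (hc : c * c = -1) (i j k l m t : Fin n) :
    B j i c * B l k c * B t m c - B t m c * B l k c * B j i c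
      - (if j = k ∧ l = m then B t i c else 0)
      + (if t = k ∧ l = i then B j m c else 0) = 0 := by
  have h3 : c * c * c = -c := by rw [hc]; ring
  simp only [B3, h3]
  have e1 : (i = l ∧ k = t) ↔ (t = k ∧ l = i) :=
    ⟨fun h => ⟨h.2.symm, h.1.symm⟩, fun h => ⟨h.2.symm, h.1.symm⟩⟩
  have e2 : (m = l ∧ k = j) ↔ (j = k ∧ l = m) :=
    ⟨fun h => ⟨h.2.symm, h.1.symm⟩, fun h => ⟨h.2.symm, h.1.symm⟩⟩
  rw [if_congr e1 rfl rfl, if_congr e2 rfl rfl]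
  simp only [Bneg]
  split_ifs <;> abel

/-- Images of the generators in `F × M_n^4`: the five irreducible representations
`a ↦ 0`, `a ↦ a`, `a ↦ -a`, `a ↦ z aᵀ`, `a ↦ -z aᵀ` (where `z² = -1`). -/
def G (z : F) (i j : Fin n) : Tgt F n :=
  (0, (B i j 1, B i j (-1), B j i z, B j i (-z)))

lemma ite_prod {α β : Type*} [Zero α] [Zero β] (c : Prop) [Decidable c] (x : α) (y : β) :
    (if c then ((x, y) : α × β) else 0) = (if c then x else 0, if c then y else 0) := by
  split_ifs <;> rfl

lemma G_rel (z : F) (hz : z * z = -1) (i j k l m t : Fin n) :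
    G z i j * G z k l * G z m t - G z m t * G z k l * G z i j
      - (if j = k ∧ l = m then G z i t else 0)
      + (if t = k ∧ l = i then G z m j else 0) = 0 := by
  have hone : (1 : F) * 1 = 1 := one_mul 1
  have hmone : (-1 : F) * -1 = 1 := by ring
  have hmz : (-z) * -z = -1 := by rw [← hz]; ring
  have c1 := keyA (1 : F) hone i j k l m t
  have c2 := keyA (-1 : F) hmone i j k l m t
  have c3 := keyB z hz i j k l m t
  have c4 := keyB (-z) hmz i j k l m t
  simp only [G, ite_prod, Prod.mk_mul_mk, Prod.mk_sub_mk, Prod.mk_add_mk]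
  refine Prod.ext ?_ (Prod.ext ?_ (Prod.ext ?_ (Prod.ext ?_ ?_))) <;>
    simp_all

/-- The representation of the free algebra. -/
def rep (z : F) : FreeAlgebra F (Fin n × Fin n) →ₐ[F] Tgt F n :=
  FreeAlgebra.lift F fun p => G z p.1 p.2

lemma rep_rel (z : F) (hz : z * z = -1) :
    ∀ ⦃a b : FreeAlgebra F (Fin n × Fin n)⦄, ajtsRel F n a b → rep z a = rep z b := by
  rintro a b ⟨rfl, i, j, k, l, m, t, rfl⟩
  rw [_root_.map_zero, _root_.map_add, _root_.map_sub, _root_.map_sub, _root_.map_mul,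
    _root_.map_mul, _root_.map_mul, _root_.map_mul,
    apply_ite ⇑(rep z), apply_ite ⇑(rep z), _root_.map_zero]
  simp only [rep, FreeAlgebra.lift_ι_apply]
  exact G_rel z hz i j k l m t

/-- The induced algebra homomorphism on the universal envelope. -/
def Φ (z : F) (hz : z * z = -1) : Env F n →ₐ[F] Tgt F n :=
  RingQuot.liftAlgHom F ⟨rep z, rep_rel z hz⟩

lemma G_mem (z : F) (hz : z * z = -1) (i j : Fin n) : G z i j ∈ (Φ z hz (n := n)).range := by
  refine (AlgHom.mem_range _).mpr ⟨RingQuot.mkAlgHom F (ajtsRel F n) (FreeAlgebra.ι F (i, j)), ?_⟩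
  show (RingQuot.liftAlgHom F ⟨rep z, rep_rel z hz⟩)
      ((RingQuot.mkAlgHom F (ajtsRel F n)) (FreeAlgebra.ι F (i, j))) = G z i j
  rw [RingQuot.liftAlgHom_mkAlgHom_apply]
  simp [rep]

lemma slot_mem (R : Subalgebra F (Tgt F n)) (ℓ : M F n →ₗ[F] Tgt F n)
    (h : ∀ a b, ℓ (B a b 1) ∈ R) (A : M F n) : ℓ A ∈ R := by
  have hA : A = ∑ a, ∑ b, A a b • B a b 1 := by
    conv_lhs => rw [Matrix.matrix_eq_sum_single A]
    refine Finset.sum_congr rfl fun a _ => Finset.sum_congr rfl fun b _ => ?_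
    rw [Bsmul, mul_one, B_def]
  rw [hA, _root_.map_sum]
  refine sum_mem fun a _ => ?_
  rw [_root_.map_sum]
  refine sum_mem fun b _ => ?_
  rw [_root_.map_smul]
  exact R.smul_mem (h a b) _

end AJTSAux

open AJTSAux Matrix in
/-- If the universal associative envelope `𝔄` is finite-dimensional over `F`,
then `dim_F 𝔄 ≥ 4n² + 1`. -/
theorem envelope_dim_lower_bound (F : Type*) [Field F] [IsAlgClosed F] [CharZero F]
    (n : ℕ) (hn : 2 ≤ n) (h : FiniteDimensional F (Env F n)) :
    4 * n ^ 2 + 1 ≤ Module.finrank F (Env F n) := by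
  obtain ⟨z, hz2⟩ := IsAlgClosed.exists_pow_nat_eq (-1 : F) (by norm_num : 0 < 2)
  have hz : z * z = -1 := by rw [← pow_two]; exact hz2
  set Φ' := Φ (n := n) z hz with hΦ'
  set R := Φ'.range with hR
  have h0 : (0 : ℕ) < n := by omega
  have h1 : (1 : ℕ) < n := by omega
  set i0 : Fin n := ⟨0, h0⟩
  set i1 : Fin n := ⟨1, h1⟩
  have hi01 : i0 ≠ i1 := by simp [i0, i1, Fin.ext_iff]
  have hG : ∀ i j, G z i j ∈ R := fun i j => G_mem z hz i j
  have hGmul : ∀ a b c d : Fin n, G z a b * G z c d =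
      (0, (if b = c then B a d 1 else 0, if b = c then B a d 1 else 0,
           if a = d then B b c (-1) else 0, if a = d then B b c (-1) else 0)) := by
    intro a b c d
    simp only [G, Prod.mk_mul_mk, Bmul, hz, neg_mul_neg, mul_one, one_mul, mul_zero]
  have hv : ∀ i j : Fin n,
      ((0 : F), (B i i 1, B i i 1, B j j (-1), B j j (-1))) ∈ R := by
    intro i j
    have := R.mul_mem (hG i j) (hG j i)
    rwa [hGmul, if_pos rfl, if_pos rfl] at this
  have hP : ∀ i l : Fin n, ((0 : F), (B i l 1, B i l 1, 0, 0)) ∈ R := by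
    intro i l
    by_cases hil : i = l
    · subst hil
      have := R.mul_mem (hv i i0) (hv i i1)
      rwa [show (((0 : F), (B i i 1, B i i 1, B i0 i0 (-1), B i0 i0 (-1))) *
          ((0 : F), (B i i 1, B i i 1, B i1 i1 (-1), B i1 i1 (-1))) : Tgt F n)
          = ((0 : F), (B i i 1, B i i 1, 0, 0)) by
        simp [Prod.mk_mul_mk, Bmul, hi01]] at this
    · have := R.mul_mem (hG i i) (hG i l)
      rwa [hGmul, if_pos rfl, if_neg hil] at this
  have hQ : ∀ j k : Fin n, ((0 : F), (0, 0, B j k 1, B j k 1)) ∈ R := by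
    intro j k
    by_cases hjk : j = k
    · subst hjk
      have := R.sub_mem (hP i0 i0) (hv i0 j)
      rwa [show (((0 : F), (B i0 i0 1, B i0 i0 1, 0, 0)) -
          ((0 : F), (B i0 i0 1, B i0 i0 1, B j j (-1), B j j (-1))) : Tgt F n)
          = ((0 : F), (0, 0, B j j 1, B j j 1)) by
        simp [Prod.mk_sub_mk, Bneg]] at this
    · have := R.neg_mem (R.mul_mem (hG i0 j) (hG k i0))
      rw [hGmul, if_neg hjk, if_pos rfl] at this
      rwa [show (-(((0 : F), ((0 : M F n), (0 : M F n), B j k (-1), B j k (-1)))) : Tgt F n)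
          = ((0 : F), (0, 0, B j k 1, B j k 1)) by
        simp [Prod.neg_mk, Bneg]] at this
  have hS : ∀ i j : Fin n, ((0 : F), (B i j 1, B i j (-1), 0, 0)) ∈ R := by
    intro i j
    have := R.mul_mem (hP i i0) (hG i0 j)
    rwa [show (((0 : F), (B i i0 1, B i i0 1, 0, 0)) * G z i0 j : Tgt F n)
        = ((0 : F), (B i j 1, B i j (-1), 0, 0)) by
      simp [G, Prod.mk_mul_mk, Bmul]] at this
  have hzne : z ≠ 0 := by
    intro h0'
    rw [h0', mul_zero] at hz
    exact (by norm_num : (0 : F) ≠ -1) hz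
  have hT : ∀ a b : Fin n, ((0 : F), (0, 0, B a b 1, B a b (-1))) ∈ R := by
    intro a b
    have := R.smul_mem (R.sub_mem (hG b a) (hS b a)) z⁻¹
    rwa [show (z⁻¹ • (G z b a - ((0 : F), (B b a 1, B b a (-1), 0, 0))) : Tgt F n)
        = ((0 : F), (0, 0, B a b 1, B a b (-1))) by
      simp [G, Prod.mk_sub_mk, Prod.smul_mk, sub_self, smul_zero, sub_zero, Bsmul,
        inv_mul_cancel₀ hzne, mul_neg]] at this
  -- pure slot elements
  have htwo : (2 : F) ≠ 0 := two_ne_zero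
  have hsl1 : ∀ a b : Fin n, ((0 : F), (B a b 1, 0, 0, 0)) ∈ R := by
    intro a b
    have := R.smul_mem (R.add_mem (hP a b) (hS a b)) (2⁻¹ : F)
    rwa [show ((2⁻¹ : F) • (((0 : F), (B a b 1, B a b 1, 0, 0))
          + ((0 : F), (B a b 1, B a b (-1), 0, 0))) : Tgt F n)
        = ((0 : F), (B a b 1, 0, 0, 0)) by
      simp only [Prod.mk_add_mk, Prod.smul_mk, Badd, add_zero, smul_zero, Bsmul]
      norm_num [Bzero]] at this
  have hsl2 : ∀ a b : Fin n, ((0 : F), (0, B a b 1, 0, 0)) ∈ R := by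
    intro a b
    have := R.smul_mem (R.sub_mem (hP a b) (hS a b)) (2⁻¹ : F)
    rwa [show ((2⁻¹ : F) • (((0 : F), (B a b 1, B a b 1, 0, 0))
          - ((0 : F), (B a b 1, B a b (-1), 0, 0))) : Tgt F n)
        = ((0 : F), (0, B a b 1, 0, 0)) by
      simp only [Prod.mk_sub_mk, Prod.smul_mk, sub_self, smul_zero, sub_zero, Bneg, sub_neg_eq_add,
        Badd, Bsmul]
      norm_num [Bzero]
      rfl] at this
  have hsl3 : ∀ a b : Fin n, ((0 : F), (0, 0, B a b 1, 0)) ∈ R := by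
    intro a b
    have := R.smul_mem (R.add_mem (hQ a b) (hT a b)) (2⁻¹ : F)
    rwa [show ((2⁻¹ : F) • (((0 : F), (0, 0, B a b 1, B a b 1))
          + ((0 : F), (0, 0, B a b 1, B a b (-1)))) : Tgt F n)
        = ((0 : F), (0, 0, B a b 1, 0)) by
      simp only [Prod.mk_add_mk, Prod.smul_mk, Badd, add_zero, smul_zero, Bsmul]
      norm_num [Bzero]] at this
  have hsl4 : ∀ a b : Fin n, ((0 : F), (0, 0, 0, B a b 1)) ∈ R := by
    intro a b
    have := R.smul_mem (R.sub_mem (hQ a b) (hT a b)) (2⁻¹ : F)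
    rwa [show ((2⁻¹ : F) • (((0 : F), (0, 0, B a b 1, B a b 1))
          - ((0 : F), (0, 0, B a b 1, B a b (-1)))) : Tgt F n)
        = ((0 : F), (0, 0, 0, B a b 1)) by
      simp only [Prod.mk_sub_mk, Prod.smul_mk, sub_self, smul_zero, sub_zero, Bneg, sub_neg_eq_add,
        Badd, Bsmul]
      norm_num [Bzero]] at this
  -- full matrix slots
  have hA1 : ∀ A : M F n, ((0 : F), (A, 0, 0, 0)) ∈ R := by
    intro A
    have := slot_mem R
      ((LinearMap.inr F F _).comp (LinearMap.inl F (M F n) (M F n × M F n × M F n)))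
      (fun a b => by simpa [Prod.mk_zero_zero] using hsl1 a b) A
    simpa [Prod.mk_zero_zero] using this
  have hA2 : ∀ A : M F n, ((0 : F), ((0 : M F n), A, 0, 0)) ∈ R := by
    intro A
    have := slot_mem R
      ((LinearMap.inr F F _).comp (((LinearMap.inr F (M F n) _)).comp
        (LinearMap.inl F (M F n) (M F n × M F n))))
      (fun a b => by simpa [Prod.mk_zero_zero] using hsl2 a b) A
    simpa [Prod.mk_zero_zero] using this
  have hA3 : ∀ A : M F n, ((0 : F), ((0 : M F n), 0, A, 0)) ∈ R := by
    intro A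
    have := slot_mem R
      ((LinearMap.inr F F _).comp (((LinearMap.inr F (M F n) _)).comp
        (((LinearMap.inr F (M F n) _)).comp (LinearMap.inl F (M F n) (M F n)))))
      (fun a b => by simpa using hsl3 a b) A
    simpa using this
  have hA4 : ∀ A : M F n, ((0 : F), ((0 : M F n), 0, 0, A)) ∈ R := by
    intro A
    have := slot_mem R
      ((LinearMap.inr F F _).comp (((LinearMap.inr F (M F n) _)).comp
        (((LinearMap.inr F (M F n) _)).comp ((LinearMap.inr F (M F n) (M F n))))))
      (fun a b => by simpa using hsl4 a b) A
    simpa using this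
  -- the unit slot
  have he1 : ((1 : F), ((0 : M F n), 0, 0, 0)) ∈ R := by
    have h1111 : ((0 : F), ((1 : M F n), 1, 1, 1)) ∈ R := by
      have := R.add_mem (R.add_mem (hA1 1) (hA2 1)) (R.add_mem (hA3 1) (hA4 1))
      rwa [show (((0 : F), ((1 : M F n), 0, 0, 0)) + ((0 : F), ((0 : M F n), 1, 0, 0))
          + (((0 : F), ((0 : M F n), 0, 1, 0)) + ((0 : F), ((0 : M F n), 0, 0, 1))) : Tgt F n)
          = ((0 : F), ((1 : M F n), 1, 1, 1)) by
        simp [Prod.mk_add_mk]] at this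
    have := R.sub_mem R.one_mem h1111
    rwa [show ((1 : Tgt F n) - ((0 : F), ((1 : M F n), 1, 1, 1)))
        = ((1 : F), ((0 : M F n), 0, 0, 0)) by
      simp [Prod.ext_iff]] at this
  -- surjectivity
  have hfull : ∀ x : Tgt F n, x ∈ R := by
    intro x
    obtain ⟨c, A, B', C, D⟩ := x
    have hx : ((c, (A, B', C, D)) : Tgt F n)
        = c • ((1 : F), ((0 : M F n), 0, 0, 0)) + (((0 : F), (A, 0, 0, 0))
          + (((0 : F), ((0 : M F n), B', 0, 0)) + (((0 : F), ((0 : M F n), 0, C, 0))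
          + ((0 : F), ((0 : M F n), 0, 0, D))))) := by
      simp [Prod.smul_mk, Prod.mk_add_mk, smul_eq_mul]
    rw [hx]
    exact R.add_mem (R.smul_mem he1 c) (R.add_mem (hA1 A) (R.add_mem (hA2 B')
      (R.add_mem (hA3 C) (hA4 D))))
  have hsurj : Function.Surjective Φ' := fun y => (AlgHom.mem_range _).mp (hfull y)
  -- finrank bound
  have hrange : LinearMap.range Φ'.toLinearMap = ⊤ := LinearMap.range_eq_top.mpr hsurj
  have hle := LinearMap.finrank_range_le Φ'.toLinearMap
  rw [hrange, finrank_top] at hle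
  have hrank : Module.finrank F (Tgt F n) = 4 * n ^ 2 + 1 := by
    simp only [Tgt, Module.finrank_prod, Module.finrank_matrix, Module.finrank_self,
      Fintype.card_fin, mul_one]
    ring
  omega

end
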